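/- Suppose for each j = 1,…,n, (R_j, B_j, L_j) is a frame triple with bounds C_j ≤ D_j, where R_j are d×d expanding integer matrices and B_j, L_j ⊂ ℤ^d are finite sets containing 0. Let 𝐑_n = R_n⋯R_1, 𝐁_n = R_n⋯R_2(B_1) + R_n⋯R_3(B_2) + ⋯ + B_n, and Λ_n = L_1 + R_1ᵀ(L_2) + ⋯ + (R_1ᵀ⋯R_{n-1}ᵀ)(L_n). Then (𝐑_n, 𝐁_n, Λ_n) forms a frame triple with bounds ∏_{j=1}^n C_j and ∏_{j=1}^n D_j. -/

import Mathlib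

open Complex Matrix Finset

noncomputable section

/-- Real version of an integer matrix. -/
def realMat {d : ℕ} (R : Matrix (Fin d) (Fin d) ℤ) : Matrix (Fin d) (Fin d) ℝ :=
  R.map (Int.cast)

/-- `R` is expanding: all (complex) eigenvalues have modulus strictly greater than 1. -/
def Expanding {d : ℕ} (R : Matrix (Fin d) (Fin d) ℤ) : Prop :=
  ∀ z : ℂ, (R.map (Int.cast : ℤ → ℂ)).charpoly.IsRoot z → 1 < ‖z‖

/-- Euclidean inner product on `ℝ^d`. -/
def ip {d : ℕ} (x y : Fin d → ℝ) : ℝ := ∑ i, x i * y i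

/-- The vector `e_{R,λ} = (1/√#B) (e^{2πi⟨R⁻¹b,λ⟩})_{b∈B} ∈ ℂ^{#B}`. -/
def eVec {d : ℕ} (R : Matrix (Fin d) (Fin d) ℤ) (B : Finset (Fin d → ℤ))
    (lam : Fin d → ℤ) : B → ℂ :=
  fun b => ((Real.sqrt B.card : ℂ))⁻¹ *
    Complex.exp (2 * Real.pi * Complex.I *
      (ip ((realMat R)⁻¹ *ᵥ (fun j => ((b : Fin d → ℤ) j : ℝ))) (fun i => (lam i : ℝ))))

/-- `(R,B,L)` is a frame triple with bounds `C ≤ D`. -/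
def IsFrameTriple {d : ℕ} (R : Matrix (Fin d) (Fin d) ℤ) (B L : Finset (Fin d → ℤ))
    (C D : ℝ) : Prop :=
  ∀ x : B → ℂ,
    C * ∑ b, ‖x b‖ ^ 2 ≤ ∑ lam ∈ L, ‖∑ b, x b * (starRingEnd ℂ) (eVec R B lam b)‖ ^ 2 ∧
    ∑ lam ∈ L, ‖∑ b, x b * (starRingEnd ℂ) (eVec R B lam b)‖ ^ 2 ≤ D * ∑ b, ‖x b‖ ^ 2

/-- `(R,B,L)` is a Riesz sequence triple with bounds `C ≤ D`. -/
def IsRieszTriple {d : ℕ} (R : Matrix (Fin d) (Fin d) ℤ) (B L : Finset (Fin d → ℤ))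
    (C D : ℝ) : Prop :=
  ∀ a : L → ℂ,
    C * ∑ lam, ‖a lam‖ ^ 2 ≤ ∑ b, ‖∑ lam, a lam * eVec R B lam b‖ ^ 2 ∧
    ∑ b, ‖∑ lam, a lam * eVec R B lam b‖ ^ 2 ≤ D * ∑ lam, ‖a lam‖ ^ 2


/-- `𝐑_n = R_n ⋯ R_1` (with 0-based indexing: `bigR R n = R (n-1) * ⋯ * R 0`). -/
def bigR {d : ℕ} (R : ℕ → Matrix (Fin d) (Fin d) ℤ) : ℕ → Matrix (Fin d) (Fin d) ℤ
  | 0 => 1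
  | n + 1 => R n * bigR R n

def castVec {d : ℕ} (v : Fin d → ℤ) : Fin d → ℝ := fun i => (v i : ℝ)

/-- The point `𝐑_n⁻¹𝐛 = ∑_{k=1}^n 𝐑_k⁻¹ b_k` associated to a digit tuple. -/
def tuplePoint {d n : ℕ} (R : ℕ → Matrix (Fin d) (Fin d) ℤ) (B : ℕ → Finset (Fin d → ℤ))
    (t : (j : Fin n) → (B (j : ℕ))) : Fin d → ℝ :=
  ∑ j : Fin n, (realMat (bigR R ((j : ℕ) + 1)))⁻¹ *ᵥ castVec (t j)

/-- The frequency `λ = ∑_{k=1}^n (R_1ᵀ⋯R_{k-1}ᵀ) l_k ∈ Λ_n` associated to a tuple. -/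
def tupleFreq {d n : ℕ} (R : ℕ → Matrix (Fin d) (Fin d) ℤ) (L : ℕ → Finset (Fin d → ℤ))
    (l : (j : Fin n) → (L (j : ℕ))) : Fin d → ℤ :=
  ∑ j : Fin n, (bigR R (j : ℕ))ᵀ *ᵥ ((l j : Fin d → ℤ))

/-- The concatenated exponential vector entry
`(1/√(∏ #B_j)) e^{2πi ⟨𝐑_n⁻¹𝐛, λ⟩}` for the triple `(𝐑_n, 𝐁_n, Λ_n)`. -/
def bigEVec {d n : ℕ} (R : ℕ → Matrix (Fin d) (Fin d) ℤ) (B L : ℕ → Finset (Fin d → ℤ))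
    (t : (j : Fin n) → (B (j : ℕ))) (l : (j : Fin n) → (L (j : ℕ))) : ℂ :=
  ((Real.sqrt (∏ j ∈ Finset.range n, ((B j).card : ℝ)) : ℂ))⁻¹ *
    Complex.exp (2 * Real.pi * Complex.I *
      (ip (tuplePoint R B t) (castVec (tupleFreq R L l))))

section Helpers

variable {d : ℕ}

lemma realMat_mul (A B : Matrix (Fin d) (Fin d) ℤ) :
    realMat (A * B) = realMat A * realMat B := by
  simpa [realMat] using (Matrix.map_mul (L := A) (M := B) (f := Int.castRingHom ℝ))

lemma realMat_one : realMat (1 : Matrix (Fin d) (Fin d) ℤ) = 1 := by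
  simpa [realMat] using (Matrix.map_one (Int.cast : ℤ → ℝ) Int.cast_zero Int.cast_one)

lemma realMat_det (A : Matrix (Fin d) (Fin d) ℤ) : (realMat A).det = (A.det : ℝ) := by
  simpa [realMat] using (RingHom.map_det (Int.castRingHom ℝ) A).symm

lemma det_ne_zero_of_expanding (A : Matrix (Fin d) (Fin d) ℤ) (h : Expanding A) :
    A.det ≠ 0 := by
  intro h0
  have hc : (A.map (Int.cast : ℤ → ℂ)).det = 0 := by
    have := (RingHom.map_det (Int.castRingHom ℂ) A).symm
    simp only [RingHom.mapMatrix_apply] at this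
    rw [show ((Int.castRingHom ℂ) : ℤ → ℂ) = (Int.cast : ℤ → ℂ) from rfl] at this
    rw [this, h0, Int.cast_zero]
  have hco : (A.map (Int.cast : ℤ → ℂ)).charpoly.coeff 0 = 0 := by
    have := Matrix.det_eq_sign_charpoly_coeff (A.map (Int.cast : ℤ → ℂ))
    rw [hc] at this
    have h1 : ((-1 : ℂ)) ^ Fintype.card (Fin d) ≠ 0 := by
      simp
    field_simp at this
    exact (mul_eq_zero.1 this.symm).resolve_left h1
  have hroot : (A.map (Int.cast : ℤ → ℂ)).charpoly.IsRoot 0 := by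
    rwa [Polynomial.IsRoot, ← Polynomial.coeff_zero_eq_eval_zero]
  have := h 0 hroot
  simp only [norm_zero] at this
  exact absurd this (by norm_num)

lemma bigR_det_unit (R : ℕ → Matrix (Fin d) (Fin d) ℤ) (hexp : ∀ j, Expanding (R j)) :
    ∀ m : ℕ, IsUnit (realMat (bigR R m)).det := by
  intro m
  induction m with
  | zero => simp [bigR, realMat_one]
  | succ m ih =>
    rw [show bigR R (m+1) = R m * bigR R m from rfl, realMat_mul, Matrix.det_mul]
    exact ((isUnit_iff_ne_zero.2 (by
      rw [realMat_det]
      exact_mod_cast Int.cast_ne_zero.2 (det_ne_zero_of_expanding _ (hexp m)))).mul ih)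

lemma castVec_mulVec (M : Matrix (Fin d) (Fin d) ℤ) (v : Fin d → ℤ) :
    castVec (M *ᵥ v) = realMat M *ᵥ castVec v := by
  funext i
  simp [castVec, realMat, Matrix.mulVec, dotProduct]

lemma ip_eq_dot (x y : Fin d → ℝ) : ip x y = x ⬝ᵥ y := rfl

lemma bigR_factor (R : ℕ → Matrix (Fin d) (Fin d) ℤ) :
    ∀ {j n : ℕ}, j ≤ n → ∃ P, bigR R n = P * bigR R j := by
  intro j n h
  induction n with
  | zero => exact ⟨1, by simp [Nat.le_zero.1 h]⟩
  | succ n ih =>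
    rcases Nat.lt_or_ge j (n+1) with hlt | hge
    · obtain ⟨P, hP⟩ := ih (Nat.lt_succ_iff.1 hlt)
      exact ⟨R n * P, by rw [show bigR R (n+1) = R n * bigR R n from rfl, hP, mul_assoc]⟩
    · have : j = n + 1 := le_antisymm h hge
      exact ⟨1, by rw [this, one_mul]⟩

/-- key integrality: `⟨(bigR j)⁻¹ b, (bigR n)ᵀ l⟩ ∈ ℤ` for `j ≤ n`. -/
lemma key_int (R : ℕ → Matrix (Fin d) (Fin d) ℤ) (hexp : ∀ j, Expanding (R j))
    {j n : ℕ} (hj : j ≤ n) (b l : Fin d → ℤ) :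
    ∃ m : ℤ, ip ((realMat (bigR R j))⁻¹ *ᵥ castVec b)
      ((realMat (bigR R n))ᵀ *ᵥ castVec l) = (m : ℝ) := by
  obtain ⟨P, hP⟩ := bigR_factor R hj
  refine ⟨(P *ᵥ b) ⬝ᵥ l, ?_⟩
  rw [ip_eq_dot, Matrix.mulVec_transpose, dotProduct_comm,
    Matrix.dotProduct_mulVec]
  have hfac : realMat (bigR R n) * (realMat (bigR R j))⁻¹ = realMat P := by
    rw [hP, realMat_mul, mul_assoc, Matrix.mul_nonsing_inv _ (bigR_det_unit R hexp j),
      mul_one]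
  rw [Matrix.vecMul_vecMul, hfac, ← Matrix.dotProduct_mulVec, ← castVec_mulVec]
  push_cast [castVec, dotProduct]
  exact Finset.sum_congr rfl fun i _ => mul_comm _ _

end Helpers
section Snoc
variable {d : ℕ}

lemma sum_snoc {n : ℕ} {M : Type*} [AddCommMonoid M] (B : ℕ → Finset (Fin d → ℤ))
    (f : ((j : Fin (n+1)) → (B (j : ℕ))) → M) :
    ∑ t, f t = ∑ b : (B n), ∑ t' : (j : Fin n) → (B (j : ℕ)), f (Fin.snoc t' b) := by
  rw [← Equiv.sum_comp (Fin.snocEquiv (fun j : Fin (n+1) => (B (j : ℕ)))) f,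
    Fintype.sum_prod_type]
  rfl

end Snoc
section Factor
variable {d : ℕ}

lemma castVec_add (u v : Fin d → ℤ) : castVec (u + v) = castVec u + castVec v := by
  funext i; simp [castVec]

lemma realMat_transpose (M : Matrix (Fin d) (Fin d) ℤ) :
    realMat (Mᵀ) = (realMat M)ᵀ := by
  simp [realMat, Matrix.transpose_map]

lemma ip_add_left (u v w : Fin d → ℝ) : ip (u + v) w = ip u w + ip v w := by
  simp [ip_eq_dot, add_dotProduct]

lemma ip_add_right (u v w : Fin d → ℝ) : ip u (v + w) = ip u v + ip u w := by
  simp [ip_eq_dot, dotProduct_add]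

lemma ip_sum_left {ι : Type*} (s : Finset ι) (f : ι → Fin d → ℝ) (y : Fin d → ℝ) :
    ip (∑ i ∈ s, f i) y = ∑ i ∈ s, ip (f i) y := by
  simp only [ip, Finset.sum_apply, Finset.sum_mul]
  exact Finset.sum_comm

lemma tuplePoint_snoc {n : ℕ} (R : ℕ → Matrix (Fin d) (Fin d) ℤ)
    (B : ℕ → Finset (Fin d → ℤ)) (t' : (j : Fin n) → (B (j : ℕ))) (b : (B n)) :
    tuplePoint R B (Fin.snoc t' b) =
      tuplePoint R B t' + (realMat (bigR R (n + 1)))⁻¹ *ᵥ castVec (b : Fin d → ℤ) := by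
  unfold tuplePoint
  rw [Fin.sum_univ_castSucc]
  simp [Fin.snoc_castSucc, Fin.snoc_last]

lemma tupleFreq_snoc {n : ℕ} (R : ℕ → Matrix (Fin d) (Fin d) ℤ)
    (L : ℕ → Finset (Fin d → ℤ)) (l' : (j : Fin n) → (L (j : ℕ))) (ln : (L n)) :
    tupleFreq R L (Fin.snoc l' ln) =
      tupleFreq R L l' + (bigR R n)ᵀ *ᵥ (ln : Fin d → ℤ) := by
  unfold tupleFreq
  rw [Fin.sum_univ_castSucc]
  simp [Fin.snoc_castSucc, Fin.snoc_last]

lemma last_term (R : ℕ → Matrix (Fin d) (Fin d) ℤ) (hexp : ∀ j, Expanding (R j))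
    (n : ℕ) (b ln : Fin d → ℤ) :
    ip ((realMat (bigR R (n + 1)))⁻¹ *ᵥ castVec b) ((realMat (bigR R n))ᵀ *ᵥ castVec ln)
      = ip ((realMat (R n))⁻¹ *ᵥ castVec b) (castVec ln) := by
  have hfac : realMat (bigR R n) * (realMat (bigR R (n + 1)))⁻¹ = (realMat (R n))⁻¹ := by
    rw [show bigR R (n+1) = R n * bigR R n from rfl, realMat_mul, Matrix.mul_inv_rev,
      ← mul_assoc, Matrix.mul_nonsing_inv _ (bigR_det_unit R hexp n), one_mul]
  rw [ip_eq_dot, ip_eq_dot, Matrix.mulVec_transpose, dotProduct_comm,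
    Matrix.dotProduct_mulVec, Matrix.vecMul_vecMul, hfac, ← Matrix.dotProduct_mulVec,
    dotProduct_comm]

lemma exponent_snoc (R : ℕ → Matrix (Fin d) (Fin d) ℤ) (B L : ℕ → Finset (Fin d → ℤ))
    (hexp : ∀ j, Expanding (R j)) {n : ℕ}
    (t' : (j : Fin n) → (B (j : ℕ))) (b : (B n))
    (l' : (j : Fin n) → (L (j : ℕ))) (ln : (L n)) :
    ∃ m : ℤ, ip (tuplePoint R B (Fin.snoc t' b)) (castVec (tupleFreq R L (Fin.snoc l' ln)))
      = ip (tuplePoint R B t') (castVec (tupleFreq R L l'))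
        + ip ((realMat (R n))⁻¹ *ᵥ castVec (b : Fin d → ℤ)) (castVec (ln : Fin d → ℤ))
        + ip ((realMat (bigR R (n + 1)))⁻¹ *ᵥ castVec (b : Fin d → ℤ))
            (castVec (tupleFreq R L l'))
        + (m : ℝ) := by
  rw [tuplePoint_snoc, tupleFreq_snoc, castVec_add, castVec_mulVec, realMat_transpose,
    ip_add_left, ip_add_right, ip_add_right]
  -- cross term: ip (tuplePoint t') ((realMat (bigR n))ᵀ *ᵥ castVec ln) is an integer
  have hcross : ∃ m : ℤ, ip (tuplePoint R B t')
      ((realMat (bigR R n))ᵀ *ᵥ castVec (ln : Fin d → ℤ)) = (m : ℝ) := by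
    unfold tuplePoint
    rw [ip_sum_left]
    have h : ∀ j : Fin n, ∃ m : ℤ,
        ip ((realMat (bigR R ((j : ℕ) + 1)))⁻¹ *ᵥ castVec ((t' j : Fin d → ℤ)))
          ((realMat (bigR R n))ᵀ *ᵥ castVec (ln : Fin d → ℤ)) = (m : ℝ) :=
      fun j => key_int R hexp (Nat.succ_le_of_lt j.isLt) _ _
    refine ⟨∑ j : Fin n, (h j).choose, ?_⟩
    push_cast
    exact Finset.sum_congr rfl fun j _ => (h j).choose_spec
  obtain ⟨m, hm⟩ := hcross
  exact ⟨m, by rw [hm, last_term R hexp]; ring⟩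

lemma norm_exp_phase (r : ℝ) : ‖Complex.exp (2 * Real.pi * Complex.I * r)‖ = 1 := by
  rw [show (2 * Real.pi * Complex.I * r : ℂ) = ((2 * Real.pi * r : ℝ) : ℂ) * Complex.I by
    push_cast; ring]
  exact Complex.norm_exp_ofReal_mul_I _

lemma exp_two_pi_add3 (a b c : ℝ) (m : ℤ) :
    Complex.exp (2 * Real.pi * Complex.I * ((a + b + c + (m : ℝ) : ℝ) : ℂ))
      = Complex.exp (2 * Real.pi * Complex.I * (a : ℂ)) *
        Complex.exp (2 * Real.pi * Complex.I * (b : ℂ)) *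
        Complex.exp (2 * Real.pi * Complex.I * (c : ℂ)) := by
  rw [show (2 * (Real.pi : ℂ) * Complex.I * ((a + b + c + (m : ℝ) : ℝ) : ℂ))
      = 2 * Real.pi * Complex.I * a + 2 * Real.pi * Complex.I * b
        + 2 * Real.pi * Complex.I * c + (m : ℂ) * (2 * Real.pi * Complex.I) by
    push_cast; ring]
  rw [Complex.exp_add, Complex.exp_add, Complex.exp_add,
    Complex.exp_int_mul_two_pi_mul_I, mul_one]

set_option maxHeartbeats 1000000 in
lemma bigEVec_snoc (R : ℕ → Matrix (Fin d) (Fin d) ℤ) (B L : ℕ → Finset (Fin d → ℤ))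
    (hexp : ∀ j, Expanding (R j)) {n : ℕ}
    (t' : (j : Fin n) → (B (j : ℕ))) (b : (B n))
    (l' : (j : Fin n) → (L (j : ℕ))) (ln : (L n)) :
    bigEVec R B L (Fin.snoc t' b) (Fin.snoc l' ln)
      = bigEVec R B L t' l' * (eVec (R n) (B n) (ln : Fin d → ℤ) b *
          Complex.exp (2 * Real.pi * Complex.I *
            (ip ((realMat (bigR R (n + 1)))⁻¹ *ᵥ castVec (b : Fin d → ℤ))
              (castVec (tupleFreq R L l')) : ℝ))) := by
  obtain ⟨m, hm⟩ := exponent_snoc R B L hexp t' b l' ln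
  unfold bigEVec eVec
  rw [hm]
  have hsqrt : ((Real.sqrt (∏ j ∈ Finset.range (n+1), ((B j).card : ℝ)) : ℂ))⁻¹
      = ((Real.sqrt (∏ j ∈ Finset.range n, ((B j).card : ℝ)) : ℂ))⁻¹ *
        ((Real.sqrt ((B n).card : ℝ) : ℂ))⁻¹ := by
    rw [Finset.prod_range_succ, Real.sqrt_mul (Finset.prod_nonneg fun j _ => by positivity)]
    push_cast
    rw [mul_inv]
  rw [hsqrt, exp_two_pi_add3,
    show (fun j => (((b : Fin d → ℤ) j : ℤ) : ℝ)) = castVec (b : Fin d → ℤ) from rfl,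
    show (fun i => (((ln : Fin d → ℤ) i : ℤ) : ℝ)) = castVec (ln : Fin d → ℤ) from rfl]
  ring


end Factor
lemma main_aux {d : ℕ} (R : ℕ → Matrix (Fin d) (Fin d) ℤ) (B L : ℕ → Finset (Fin d → ℤ))
    (C D : ℕ → ℝ) (hexp : ∀ j, Expanding (R j)) (hCD : ∀ j, 0 < C j ∧ C j ≤ D j) :
    ∀ n : ℕ, (∀ j < n, IsFrameTriple (R j) (B j) (L j) (C j) (D j)) →
    ∀ x : ((j : Fin n) → (B (j : ℕ))) → ℂ,
      (∏ j ∈ Finset.range n, C j) * ∑ t, ‖x t‖ ^ 2 ≤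
        ∑ l : (j : Fin n) → (L (j : ℕ)),
          ‖∑ t, x t * (starRingEnd ℂ) (bigEVec R B L t l)‖ ^ 2 ∧
      ∑ l : (j : Fin n) → (L (j : ℕ)),
          ‖∑ t, x t * (starRingEnd ℂ) (bigEVec R B L t l)‖ ^ 2 ≤
        (∏ j ∈ Finset.range n, D j) * ∑ t, ‖x t‖ ^ 2 := by
  intro n
  induction n with
  | zero =>
    intro _ x
    have hb : ∀ (t : (j : Fin 0) → (B (j : ℕ))) (l : (j : Fin 0) → (L (j : ℕ))),
        bigEVec R B L t l = 1 := by
      intro t l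
      unfold bigEVec tuplePoint
      simp [ip]
    constructor
    · simp [hb, Fintype.sum_unique]
    · simp [hb, Fintype.sum_unique]
  | succ n ih =>
    intro htr x
    have htr' : ∀ j < n, IsFrameTriple (R j) (B j) (L j) (C j) (D j) :=
      fun j hj => htr j (hj.trans (Nat.lt_succ_self n))
    have hframe : IsFrameTriple (R n) (B n) (L n) (C n) (D n) := htr n (Nat.lt_succ_self n)
    set ph : (B n) → ((j : Fin n) → (L (j : ℕ))) → ℂ := fun b l' =>
      Complex.exp (2 * Real.pi * Complex.I *
        (ip ((realMat (bigR R (n + 1)))⁻¹ *ᵥ castVec (b : Fin d → ℤ))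
          (castVec (tupleFreq R L l')) : ℝ)) with hph
    set y : ((j : Fin n) → (L (j : ℕ))) → (B n) → ℂ := fun l' b =>
      (∑ t' : (j : Fin n) → (B (j : ℕ)),
        x (Fin.snoc t' b) * (starRingEnd ℂ) (bigEVec R B L t' l')) *
        (starRingEnd ℂ) (ph b l') with hy
    have hnorm_y : ∀ l' b, ‖y l' b‖ ^ 2 =
        ‖∑ t' : (j : Fin n) → (B (j : ℕ)),
          x (Fin.snoc t' b) * (starRingEnd ℂ) (bigEVec R B L t' l')‖ ^ 2 := by
      intro l' b
      rw [hy]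
      simp only [norm_mul, RingHomIsometric.norm_map]
      rw [hph, norm_exp_phase, mul_one]
    have hinner : ∀ (l' : (j : Fin n) → (L (j : ℕ))) (ln : (L n)),
        (∑ t : (j : Fin (n+1)) → (B (j : ℕ)),
            x t * (starRingEnd ℂ) (bigEVec R B L t (Fin.snoc l' ln)))
          = ∑ b : (B n), y l' b * (starRingEnd ℂ)
              (eVec (R n) (B n) ((ln : Fin d → ℤ)) b) := by
      intro l' ln
      rw [sum_snoc B (fun t => x t * (starRingEnd ℂ) (bigEVec R B L t (Fin.snoc l' ln)))]
      refine Finset.sum_congr rfl fun b _ => ?_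
      have hterm : ∀ t' : (j : Fin n) → (B (j : ℕ)),
          x (Fin.snoc t' b) * (starRingEnd ℂ) (bigEVec R B L (Fin.snoc t' b) (Fin.snoc l' ln))
          = (x (Fin.snoc t' b) * (starRingEnd ℂ) (bigEVec R B L t' l')) *
              (starRingEnd ℂ) (ph b l') *
              (starRingEnd ℂ) (eVec (R n) (B n) ((ln : Fin d → ℤ)) b) := by
        intro t'
        rw [bigEVec_snoc R B L hexp]
        simp only [_root_.map_mul, hph]
        ring
      rw [Finset.sum_congr rfl fun t' _ => hterm t', ← Finset.sum_mul, ← Finset.sum_mul, hy]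
    have h1 : (∑ l : (j : Fin (n+1)) → (L (j : ℕ)),
          ‖∑ t, x t * (starRingEnd ℂ) (bigEVec R B L t l)‖ ^ 2)
        = ∑ l' : (j : Fin n) → (L (j : ℕ)), ∑ lam ∈ L n,
            ‖∑ b : (B n), y l' b * (starRingEnd ℂ) (eVec (R n) (B n) lam b)‖ ^ 2 := by
      rw [sum_snoc L (fun l => ‖∑ t, x t * (starRingEnd ℂ) (bigEVec R B L t l)‖ ^ 2),
        Finset.sum_comm]
      refine Finset.sum_congr rfl fun l' _ => ?_
      rw [show (∑ ln : (L n), ‖∑ t, x t * (starRingEnd ℂ)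
            (bigEVec R B L t (Fin.snoc l' ln))‖ ^ 2)
          = ∑ ln : (L n), ‖∑ b : (B n), y l' b * (starRingEnd ℂ)
              (eVec (R n) (B n) ((ln : Fin d → ℤ)) b)‖ ^ 2 from
        Finset.sum_congr rfl fun ln _ => by rw [hinner l' ln]]
      exact Finset.sum_coe_sort (L n)
        (fun lam => ‖∑ b : (B n), y l' b * (starRingEnd ℂ) (eVec (R n) (B n) lam b)‖ ^ 2)
    have htotal : (∑ b : (B n), ∑ t' : (j : Fin n) → (B (j : ℕ)),
        ‖x (Fin.snoc t' b)‖ ^ 2) = ∑ t, ‖x t‖ ^ 2 :=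
      (sum_snoc B (fun t => ‖x t‖ ^ 2)).symm
    have hswap : (∑ l' : (j : Fin n) → (L (j : ℕ)), ∑ b : (B n), ‖y l' b‖ ^ 2)
        = ∑ b : (B n), ∑ l' : (j : Fin n) → (L (j : ℕ)), ‖y l' b‖ ^ 2 :=
      Finset.sum_comm
    have hstep2 := fun b : (B n) => ih htr' (fun t' => x (Fin.snoc t' b))
    have hDn : (0:ℝ) ≤ D n := le_trans (le_of_lt (hCD n).1) (hCD n).2
    rw [h1, Finset.prod_range_succ, Finset.prod_range_succ]
    constructor
    · calc ((∏ j ∈ Finset.range n, C j) * C n) * ∑ t, ‖x t‖ ^ 2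
          = C n * ((∏ j ∈ Finset.range n, C j) * ∑ t, ‖x t‖ ^ 2) := by ring
      _ = C n * ∑ b : (B n), (∏ j ∈ Finset.range n, C j) *
            ∑ t' : (j : Fin n) → (B (j : ℕ)), ‖x (Fin.snoc t' b)‖ ^ 2 := by
          rw [← htotal, Finset.mul_sum]
      _ ≤ C n * ∑ b : (B n), ∑ l' : (j : Fin n) → (L (j : ℕ)), ‖y l' b‖ ^ 2 := by
          refine mul_le_mul_of_nonneg_left (Finset.sum_le_sum fun b _ => ?_)
            (le_of_lt (hCD n).1)
          refine le_trans (hstep2 b).1 (le_of_eq (Finset.sum_congr rfl fun l' _ => ?_))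
          rw [hnorm_y]
      _ = ∑ l' : (j : Fin n) → (L (j : ℕ)), C n * ∑ b : (B n), ‖y l' b‖ ^ 2 := by
          rw [← hswap, Finset.mul_sum]
      _ ≤ ∑ l' : (j : Fin n) → (L (j : ℕ)), ∑ lam ∈ L n,
            ‖∑ b : (B n), y l' b * (starRingEnd ℂ) (eVec (R n) (B n) lam b)‖ ^ 2 :=
          Finset.sum_le_sum fun l' _ => (hframe (y l')).1
    · calc (∑ l' : (j : Fin n) → (L (j : ℕ)), ∑ lam ∈ L n,
            ‖∑ b : (B n), y l' b * (starRingEnd ℂ) (eVec (R n) (B n) lam b)‖ ^ 2)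
          ≤ ∑ l' : (j : Fin n) → (L (j : ℕ)), D n * ∑ b : (B n), ‖y l' b‖ ^ 2 :=
          Finset.sum_le_sum fun l' _ => (hframe (y l')).2
      _ = D n * ∑ b : (B n), ∑ l' : (j : Fin n) → (L (j : ℕ)), ‖y l' b‖ ^ 2 := by
          rw [← Finset.mul_sum, hswap]
      _ ≤ D n * ∑ b : (B n), (∏ j ∈ Finset.range n, D j) *
            ∑ t' : (j : Fin n) → (B (j : ℕ)), ‖x (Fin.snoc t' b)‖ ^ 2 := by
          refine mul_le_mul_of_nonneg_left (Finset.sum_le_sum fun b _ => ?_) hDn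
          refine le_trans (le_of_eq (Finset.sum_congr rfl fun l' _ => ?_)) (hstep2 b).2
          rw [hnorm_y]
      _ = ((∏ j ∈ Finset.range n, D j) * D n) * ∑ t, ‖x t‖ ^ 2 := by
          rw [← Finset.mul_sum, ← htotal]
          ring
theorem frame_triple_concatenation {d n : ℕ}
    (R : ℕ → Matrix (Fin d) (Fin d) ℤ) (B L : ℕ → Finset (Fin d → ℤ)) (C D : ℕ → ℝ)
    (hexp : ∀ j, Expanding (R j))
    (h0B : ∀ j, (0 : Fin d → ℤ) ∈ B j) (h0L : ∀ j, (0 : Fin d → ℤ) ∈ L j)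
    (hCD : ∀ j, 0 < C j ∧ C j ≤ D j)
    (htriple : ∀ j < n, IsFrameTriple (R j) (B j) (L j) (C j) (D j)) :
    ∀ x : ((j : Fin n) → (B (j : ℕ))) → ℂ,
      (∏ j ∈ Finset.range n, C j) * ∑ t, ‖x t‖ ^ 2 ≤
        ∑ l : (j : Fin n) → (L (j : ℕ)),
          ‖∑ t, x t * (starRingEnd ℂ) (bigEVec R B L t l)‖ ^ 2 ∧
      ∑ l : (j : Fin n) → (L (j : ℕ)),
          ‖∑ t, x t * (starRingEnd ℂ) (bigEVec R B L t l)‖ ^ 2 ≤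
        (∏ j ∈ Finset.range n, D j) * ∑ t, ‖x t‖ ^ 2 := by
  exact main_aux R B L C D hexp hCD n htriple

end
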